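/- arXiv:2310.08882 — 2 statements merged into one kernel-verified Lean document; each statement's English description precedes it below -/
import Mathlib

section
/- With A the fat Cantor set of measure 1/2, g := 2·χ_A, g_i := χ_{D_i}/(L_{i-1}-L_i), f(x) := ∫_0^x g(s) ds and f_i(x) := ∫_0^x g_i(s) ds, the functions f_i converge to f uniformly on [0,1]; in fact f_{i+1} = f outside A_i and |f_{i+1}-f| ≤ 2^{-i} everywhere. -/
open MeasureTheory ENNReal

private lemma fc_baLe (n : ℕ) (a b : ℕ → ℝ)
    (hab : ∀ k, k < n → a k ≤ b k ∧ 0 ≤ a k ∧ b k ≤ 1)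
    (horder : ∀ k, k + 1 < n → b k ≤ a (k + 1)) :
    ∀ j k, j < k → k < n → b j ≤ a k := by
  intro j k
  induction k with
  | zero => omega
  | succ m ih =>
    intro hjk hkn
    rcases Nat.lt_succ_iff_lt_or_eq.mp hjk with h | h
    · exact le_trans (ih h (by omega)) (le_trans (hab m (by omega)).1 (horder m hkn))
    · subst h; exact horder j hkn

private lemma fc_aMono (n : ℕ) (a b : ℕ → ℝ)
    (hab : ∀ k, k < n → a k ≤ b k ∧ 0 ≤ a k ∧ b k ≤ 1)
    (horder : ∀ k, k + 1 < n → b k ≤ a (k + 1)) :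
    ∀ j k, j ≤ k → k < n → a j ≤ a k := by
  intro j k hjk hkn
  rcases eq_or_lt_of_le hjk with h | h
  · subst h; exact le_refl _
  · exact le_trans (hab j (by omega)).1 (fc_baLe n a b hab horder j k h hkn)

private lemma fc_zero (h : ℝ → ℝ) {c x : ℝ} (h0 : ∀ y ∈ Set.Ioo c x, h y = 0) :
    ∫ t in Set.Ioc c x, h t = 0 := by
  rw [integral_Ioc_eq_integral_Ioo, setIntegral_congr_fun measurableSet_Ioo h0]
  simp

private lemma fc_split (h : ℝ → ℝ) (hint : IntegrableOn h (Set.Icc 0 1) volume)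
    {c d e : ℝ} (h0 : 0 ≤ c) (hcd : c ≤ d) (hde : d ≤ e) (he1 : e ≤ 1) :
    ∫ t in Set.Ioc c e, h t = (∫ t in Set.Ioc c d, h t) + ∫ t in Set.Ioc d e, h t := by
  rw [← Set.Ioc_union_Ioc_eq_Ioc hcd hde]
  exact setIntegral_union (Set.Ioc_disjoint_Ioc_of_le le_rfl) measurableSet_Ioc
    (hint.mono_set (fun y hy => ⟨le_trans h0 (le_of_lt hy.1), le_trans hy.2 (le_trans hde he1)⟩))
    (hint.mono_set (fun y hy => ⟨le_trans (le_trans h0 hcd) (le_of_lt hy.1), le_trans hy.2 he1⟩))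

/-- The key computation: the running integral of a nonnegative function supported on the
union of the ordered intervals `[a k, b k]`, `k < n`, with mass `1/n` on each, equals `k/n`
at any point `x` lying (weakly) between the `k`-th gap endpoints. -/
private lemma fc_val (n : ℕ) (a b : ℕ → ℝ)
    (hab : ∀ k, k < n → a k ≤ b k ∧ 0 ≤ a k ∧ b k ≤ 1)
    (horder : ∀ k, k + 1 < n → b k ≤ a (k + 1))
    (h : ℝ → ℝ)
    (hsupp : ∀ x, (∀ k, k < n → x ∉ Set.Icc (a k) (b k)) → h x = 0)
    (hint : IntegrableOn h (Set.Icc 0 1) volume)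
    (hmass : ∀ k, k < n → ∫ t in Set.Icc (a k) (b k), h t = 1 / (n : ℝ)) :
    ∀ k, k ≤ n → ∀ x, 0 ≤ x → x ≤ 1 →
      (∀ j, k ≤ j → j < n → x ≤ a j) → (∀ j, j < k → b j ≤ x) →
      ∫ t in Set.Ioc (0 : ℝ) x, h t = k / (n : ℝ) := by
  intro k
  induction k with
  | zero =>
    intro _ x hx0 hx1 hupper _
    have : ∫ t in Set.Ioc (0 : ℝ) x, h t = 0 := by
      apply fc_zero
      intro y hy
      apply hsupp
      intro j hj hmem
      exact absurd hmem.1 (not_le.mpr (lt_of_lt_of_le hy.2 (hupper j (Nat.zero_le j) hj)))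
    simp [this]
  | succ k ih =>
    intro hkn x hx0 hx1 hupper hlower
    have hk : k < n := by omega
    have hbk : b k ≤ x := hlower k (Nat.lt_succ_self k)
    have hak := (hab k hk).2.1
    have habk := (hab k hk).1
    have hbk1 := (hab k hk).2.2
    have hFak : ∫ t in Set.Ioc (0 : ℝ) (a k), h t = k / (n : ℝ) := by
      apply ih (by omega) (a k) hak (le_trans habk hbk1)
      · intro j hj hjn; exact fc_aMono n a b hab horder k j hj hjn
      · intro j hj; exact fc_baLe n a b hab horder j k hj hk
    have hmid : ∫ t in Set.Ioc (a k) (b k), h t = 1 / (n : ℝ) := by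
      rw [← integral_Icc_eq_integral_Ioc]; exact hmass k hk
    have htail : ∫ t in Set.Ioc (b k) x, h t = 0 := by
      apply fc_zero
      intro y hy
      apply hsupp
      intro j hjn hmem
      rcases le_or_gt j k with hjk | hjk
      · have : b j ≤ b k := by
          rcases eq_or_lt_of_le hjk with h' | h'
          · subst h'; exact le_refl _
          · exact le_trans (fc_baLe n a b hab horder j k h' hk) habk
        exact absurd hmem.2 (not_le.mpr (lt_of_le_of_lt this hy.1))
      · exact absurd hmem.1 (not_le.mpr (lt_of_lt_of_le hy.2 (hupper j hjk hjn)))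
    rw [fc_split h hint (le_refl (0:ℝ)) hak (le_trans habk hbk) hx1,
      fc_split h hint hak habk hbk hx1, hFak, hmid, htail]
    push_cast
    ring

theorem stmt_13 (A : ℕ → Set ℝ) (a b : ℕ → ℕ → ℝ)
    -- A i is the union of 2^i ordered closed intervals inside [0,1]
    (hA : ∀ i, A i = ⋃ k ∈ Finset.range (2 ^ i), Set.Icc (a i k) (b i k))
    (hab : ∀ i k, k < 2 ^ i → a i k ≤ b i k ∧ 0 ≤ a i k ∧ b i k ≤ 1)
    (horder : ∀ i k, k + 1 < 2 ^ i → b i k ≤ a i (k + 1))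
    (g : ℝ → ℝ) (gi : ℕ → ℝ → ℝ)
    (hg0 : ∀ x, 0 ≤ g x) (hgi0 : ∀ i x, 0 ≤ gi i x)
    -- g is supported in every A i, and gi (i+1) is supported in A i
    (hgsupp : ∀ i x, x ∉ A i → g x = 0)
    (hgisupp : ∀ i x, x ∉ A i → gi (i + 1) x = 0)
    (hgint : IntegrableOn g (Set.Icc 0 1) volume)
    (hgiint : ∀ i, IntegrableOn (gi i) (Set.Icc 0 1) volume)
    -- on each of the 2^i intervals composing A i, g and gi (i+1) have mass 2^(-i)
    (hmass : ∀ i k, k < 2 ^ i →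
      (∫ t in Set.Icc (a i k) (b i k), g t) = 1 / 2 ^ i ∧
      (∫ t in Set.Icc (a i k) (b i k), gi (i + 1) t) = 1 / 2 ^ i) :
    (∀ i, ∀ x ∈ Set.Icc (0 : ℝ) 1, x ∉ A i →
      (∫ t in Set.Ioc (0 : ℝ) x, gi (i + 1) t) = ∫ t in Set.Ioc (0 : ℝ) x, g t) ∧
    (∀ i, ∀ x ∈ Set.Icc (0 : ℝ) 1,
      |(∫ t in Set.Ioc (0 : ℝ) x, gi (i + 1) t) - ∫ t in Set.Ioc (0 : ℝ) x, g t|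
        ≤ 1 / 2 ^ i) ∧
    TendstoUniformlyOn (fun i x => ∫ t in Set.Ioc (0 : ℝ) x, gi i t)
      (fun x => ∫ t in Set.Ioc (0 : ℝ) x, g t) Filter.atTop (Set.Icc 0 1) := by
  classical
  -- membership in A i
  have hmemA : ∀ i x, x ∈ A i ↔ ∃ k, k < 2 ^ i ∧ x ∈ Set.Icc (a i k) (b i k) := by
    intro i x
    rw [hA i]
    simp only [Set.mem_iUnion, Finset.mem_range, exists_prop]
  have hcast : ∀ i : ℕ, ((2 ^ i : ℕ) : ℝ) = 2 ^ i := by intro i; push_cast; ring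
  -- specialized versions of fc_val for g and gi (i+1)
  have hgval : ∀ i, ∀ k, k ≤ 2 ^ i → ∀ x : ℝ, 0 ≤ x → x ≤ 1 →
      (∀ j, k ≤ j → j < 2 ^ i → x ≤ a i j) → (∀ j, j < k → b i j ≤ x) →
      ∫ t in Set.Ioc (0 : ℝ) x, g t = k / (2 ^ i : ℝ) := by
    intro i k hk x hx0 hx1 hup hlo
    have := fc_val (2 ^ i) (a i) (b i) (hab i) (horder i) g
      (fun x hx => hgsupp i x (by rw [hmemA]; push_neg; intro k hk; exact hx k hk))
      hgint
      (fun k hk => by rw [hcast]; exact (hmass i k hk).1)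
      k hk x hx0 hx1 hup hlo
    rwa [hcast] at this
  have hgival : ∀ i, ∀ k, k ≤ 2 ^ i → ∀ x : ℝ, 0 ≤ x → x ≤ 1 →
      (∀ j, k ≤ j → j < 2 ^ i → x ≤ a i j) → (∀ j, j < k → b i j ≤ x) →
      ∫ t in Set.Ioc (0 : ℝ) x, gi (i + 1) t = k / (2 ^ i : ℝ) := by
    intro i k hk x hx0 hx1 hup hlo
    have := fc_val (2 ^ i) (a i) (b i) (hab i) (horder i) (gi (i + 1))
      (fun x hx => hgisupp i x (by rw [hmemA]; push_neg; intro k hk; exact hx k hk))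
      (hgiint (i + 1))
      (fun k hk => by rw [hcast]; exact (hmass i k hk).2)
      k hk x hx0 hx1 hup hlo
    rwa [hcast] at this
  -- Part 1
  have part1 : ∀ i, ∀ x ∈ Set.Icc (0 : ℝ) 1, x ∉ A i →
      (∫ t in Set.Ioc (0 : ℝ) x, gi (i + 1) t) = ∫ t in Set.Ioc (0 : ℝ) x, g t := by
    intro i x hx hxA
    have hnotmem : ∀ k, k < 2 ^ i → x ∉ Set.Icc (a i k) (b i k) := by
      intro k hk hmem
      exact hxA ((hmemA i x).mpr ⟨k, hk, hmem⟩)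
    -- find the index k of the "gap" containing x
    have hex : ∃ j, j = 2 ^ i ∨ (j < 2 ^ i ∧ x < a i j) := ⟨2 ^ i, Or.inl rfl⟩
    set k := Nat.find hex with hkdef
    have hkspec := Nat.find_spec hex
    have hkmin : ∀ j, j < k → ¬(j = 2 ^ i ∨ (j < 2 ^ i ∧ x < a i j)) :=
      fun j hj => Nat.find_min hex hj
    have hkle : k ≤ 2 ^ i := by
      by_contra hc
      exact hkmin (2 ^ i) (by omega) (Or.inl rfl)
    have hup : ∀ j, k ≤ j → j < 2 ^ i → x ≤ a i j := by
      intro j hj hjn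
      rcases hkspec with h | h
      · omega
      · exact le_trans (le_of_lt h.2) (fc_aMono (2 ^ i) (a i) (b i) (hab i) (horder i) k j hj hjn)
    have hlo : ∀ j, j < k → b i j ≤ x := by
      intro j hj
      have hjn : j < 2 ^ i := by omega
      have hnot := hkmin j hj
      push_neg at hnot
      have hax : a i j ≤ x := hnot.2 hjn
      by_contra hc
      exact hnotmem j hjn ⟨hax, le_of_not_ge fun h' => hc h'⟩
    rw [hgival i k hkle x hx.1 hx.2 hup hlo, hgval i k hkle x hx.1 hx.2 hup hlo]
  -- Part 2
  have part2 : ∀ i, ∀ x ∈ Set.Icc (0 : ℝ) 1,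
      |(∫ t in Set.Ioc (0 : ℝ) x, gi (i + 1) t) - ∫ t in Set.Ioc (0 : ℝ) x, g t|
        ≤ 1 / 2 ^ i := by
    intro i x hx
    by_cases hxA : x ∈ A i
    · obtain ⟨k, hk, hmem⟩ := (hmemA i x).mp hxA
      have hak := (hab i k hk).2.1
      have habk := (hab i k hk).1
      have hbk1 := (hab i k hk).2.2
      -- values at a i k and b i k
      have hupk : ∀ j, k ≤ j → j < 2 ^ i → a i k ≤ a i j :=
        fun j hj hjn => fc_aMono (2 ^ i) (a i) (b i) (hab i) (horder i) k j hj hjn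
      have hlok : ∀ j, j < k → b i j ≤ a i k :=
        fun j hj => fc_baLe (2 ^ i) (a i) (b i) (hab i) (horder i) j k hj hk
      have hupk1 : ∀ j, k + 1 ≤ j → j < 2 ^ i → b i k ≤ a i j :=
        fun j hj hjn => fc_baLe (2 ^ i) (a i) (b i) (hab i) (horder i) k j (by omega) hjn
      have hlok1 : ∀ j, j < k + 1 → b i j ≤ b i k := by
        intro j hj
        rcases Nat.lt_succ_iff_lt_or_eq.mp hj with h | h
        · exact le_trans (hlok j h) habk
        · subst h; exact le_refl _
      have hga : ∫ t in Set.Ioc (0 : ℝ) (a i k), g t = k / (2 ^ i : ℝ) :=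
        hgval i k (le_of_lt hk) _ hak (le_trans habk hbk1) hupk hlok
      have hgb : ∫ t in Set.Ioc (0 : ℝ) (b i k), g t = (k + 1) / (2 ^ i : ℝ) := by
        have := hgval i (k + 1) (by omega) _ (le_trans hak habk) hbk1 hupk1 hlok1
        rw [this]; push_cast; ring
      have hgia : ∫ t in Set.Ioc (0 : ℝ) (a i k), gi (i + 1) t = k / (2 ^ i : ℝ) :=
        hgival i k (le_of_lt hk) _ hak (le_trans habk hbk1) hupk hlok
      have hgib : ∫ t in Set.Ioc (0 : ℝ) (b i k), gi (i + 1) t = (k + 1) / (2 ^ i : ℝ) := by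
        have := hgival i (k + 1) (by omega) _ (le_trans hak habk) hbk1 hupk1 hlok1
        rw [this]; push_cast; ring
      -- monotonicity of the running integrals
      have hmono : ∀ h : ℝ → ℝ, (∀ y, 0 ≤ h y) → IntegrableOn h (Set.Icc 0 1) volume →
          ∀ c d : ℝ, 0 ≤ c → c ≤ d → d ≤ 1 →
          (∫ t in Set.Ioc (0 : ℝ) c, h t) ≤ ∫ t in Set.Ioc (0 : ℝ) d, h t := by
        intro h h0 hint c d hc hcd hd1
        apply setIntegral_mono_set
        · exact hint.mono_set (fun y hy => ⟨le_of_lt hy.1, le_trans hy.2 hd1⟩)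
        · exact Filter.Eventually.of_forall h0
        · exact (Set.Ioc_subset_Ioc_right hcd).eventuallyLE
      have h1 := hmono g hg0 hgint (a i k) x hak (hmem.1) hx.2
      have h2 := hmono g hg0 hgint x (b i k) hx.1 (hmem.2) hbk1
      have h3 := hmono (gi (i + 1)) (hgi0 (i + 1)) (hgiint (i + 1)) (a i k) x hak (hmem.1) hx.2
      have h4 := hmono (gi (i + 1)) (hgi0 (i + 1)) (hgiint (i + 1)) x (b i k) hx.1 (hmem.2) hbk1
      rw [hga] at h1
      rw [hgb] at h2
      rw [hgia] at h3
      rw [hgib] at h4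
      have hpow : (0 : ℝ) < 2 ^ i := by positivity
      have hdd : ((k : ℝ) + 1) / 2 ^ i - (k : ℝ) / 2 ^ i = 1 / 2 ^ i := by
        field_simp
        ring
      rw [abs_le]
      constructor
      · linarith
      · linarith
    · rw [part1 i x hx hxA]
      simp only [sub_self, abs_zero]
      positivity
  refine ⟨part1, part2, ?_⟩
  -- Part 3: uniform convergence
  rw [Metric.tendstoUniformlyOn_iff]
  intro ε hε
  obtain ⟨N, hN⟩ := exists_pow_lt_of_lt_one hε (by norm_num : (1 / 2 : ℝ) < 1)
  rw [Filter.eventually_atTop]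
  refine ⟨N + 1, fun i hi x hx => ?_⟩
  have hi1 : i - 1 + 1 = i := by omega
  have hb := part2 (i - 1) x hx
  rw [hi1] at hb
  have h1 : (1 : ℝ) / 2 ^ (i - 1) ≤ 1 / 2 ^ N := by
    apply one_div_le_one_div_of_le (by positivity)
    exact pow_le_pow_right₀ (by norm_num) (by omega)
  calc dist (∫ t in Set.Ioc (0 : ℝ) x, g t) (∫ t in Set.Ioc (0 : ℝ) x, gi i t)
      = |(∫ t in Set.Ioc (0 : ℝ) x, gi i t) - ∫ t in Set.Ioc (0 : ℝ) x, g t| := by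
        rw [Real.dist_eq, abs_sub_comm]
    _ ≤ 1 / 2 ^ (i - 1) := hb
    _ ≤ 1 / 2 ^ N := h1
    _ < ε := by rwa [div_pow, one_pow] at hN
end

section
/- Let f : [0,1] → ℝ be Lipschitz and differentiable at y ∈ (0,1). With ρ_i(x,y) := χ_{[0,1/i]}(|x-y|)·i, one has lim_{i→∞} (∫_0^1 |f(x)-f(y)|^q/|x-y|^q · ρ_i(x,y) dx)^{1/q} = 2^{1/q} |f'(y)| for every 1 < q < ∞ (here the factor 2 arises since the interval [y-1/i, y+1/i] has length 2/i). -/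
open MeasureTheory Filter Classical

theorem stmt_14 (f : ℝ → ℝ) (K : NNReal) (hf : LipschitzOnWith K f (Set.Icc 0 1))
    (y f' : ℝ) (hy : y ∈ Set.Ioo (0 : ℝ) 1) (hderiv : HasDerivAt f f' y)
    (q : ℝ) (hq : 1 < q) :
    Tendsto (fun i : ℕ =>
        (∫ x in Set.Icc (0 : ℝ) 1,
            |f x - f y| ^ q / |x - y| ^ q * (if |x - y| ≤ 1 / (i : ℝ) then (i : ℝ) else 0))
          ^ (1 / q))
      atTop (nhds ((2 : ℝ) ^ (1 / q) * |f'|)) := by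
  have hq0 : (0:ℝ) < q := lt_trans one_pos hq
  set c := |f'| with hc
  have hc0 : (0:ℝ) ≤ c := abs_nonneg _
  have hrpc : Continuous fun t : ℝ => t ^ q :=
    continuous_iff_continuousAt.mpr fun x => Real.continuousAt_rpow_const x q (Or.inr hq0.le)
  have main : Tendsto (fun i : ℕ =>
      ∫ x in Set.Icc (0 : ℝ) 1,
        |f x - f y| ^ q / |x - y| ^ q * (if |x - y| ≤ 1 / (i : ℝ) then (i : ℝ) else 0))
      atTop (nhds (2 * c ^ q)) := by
    rw [Metric.tendsto_atTop]
    intro ε hε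
    -- continuity of t ↦ t^q at c
    obtain ⟨η, hη, hηc⟩ := Metric.continuousAt_iff.mp (hrpc.continuousAt (x := c)) (ε/4) (by positivity)
    -- slope tendsto
    have hslope : Tendsto (fun x => |f x - f y| / |x - y|) (nhdsWithin y {y}ᶜ) (nhds c) := by
      have h1 := hasDerivAt_iff_tendsto_slope.mp hderiv
      have h2 := (continuous_abs.tendsto f').comp h1
      refine h2.congr fun x => ?_
      simp [slope_def_field, Function.comp, abs_div]
    have hball : ∀ᶠ x in nhdsWithin y {y}ᶜ, dist (|f x - f y| / |x - y|) c < η :=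
      hslope (Metric.ball_mem_nhds c hη)
    obtain ⟨δ, hδ, hδsub⟩ := Metric.mem_nhdsWithin_iff.mp hball
    obtain ⟨N₀, hN₀⟩ := exists_nat_gt (max (1/δ) (max (1/y) (1/(1-y))))
    refine ⟨max N₀ 1, fun i hi => ?_⟩
    have hi1 : (1:ℕ) ≤ i := le_trans (le_max_right _ _) hi
    have hipos : (0:ℝ) < (i:ℝ) := by exact_mod_cast hi1
    have hiN : (max (1/δ) (max (1/y) (1/(1-y)))) < (i:ℝ) :=
      lt_of_lt_of_le hN₀ (by exact_mod_cast le_trans (le_max_left _ _) hi)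
    set r : ℝ := 1 / (i:ℝ) with hr
    have hrpos : 0 < r := by positivity
    have hrδ : r < δ := by
      rw [hr, div_lt_iff₀ hipos] at *
      have h1 : 1/δ < (i:ℝ) := lt_of_le_of_lt (le_max_left _ _) hiN
      rw [div_lt_iff₀ hδ] at h1
      nlinarith
    have hry : r < y := by
      have h1 : 1/y < (i:ℝ) := lt_of_le_of_lt (le_trans (le_max_left _ _) (le_max_right _ _)) hiN
      rw [div_lt_iff₀ hy.1] at h1
      rw [hr, div_lt_iff₀ hipos]
      nlinarith
    have hry' : r < 1 - y := by
      have h1y : (0:ℝ) < 1 - y := by linarith [hy.2]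
      have h1 : 1/(1-y) < (i:ℝ) := lt_of_le_of_lt (le_trans (le_max_right _ _) (le_max_right _ _)) hiN
      rw [div_lt_iff₀ h1y] at h1
      rw [hr, div_lt_iff₀ hipos]
      nlinarith
    set S : Set ℝ := Set.Icc (y - r) (y + r) with hS
    have hsub : S ⊆ Set.Icc (0:ℝ) 1 := by
      intro x hx
      obtain ⟨h1, h2⟩ := hx
      constructor <;> [linarith; linarith]
    have hvolS : volume S = ENNReal.ofReal (2 * r) := by
      rw [hS, Real.volume_Icc]; ring_nf
    have hvolS' : (volume S).toReal = 2 * r := by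
      rw [hvolS, ENNReal.toReal_ofReal (by positivity)]
    have hvolfin : volume S < ⊤ := by rw [hvolS]; exact ENNReal.ofReal_lt_top
    set g : ℝ → ℝ := fun x => |f x - f y| ^ q / |x - y| ^ q * (i:ℝ) with hg
    -- rewrite integral
    have hrew : (∫ x in Set.Icc (0:ℝ) 1,
        |f x - f y| ^ q / |x - y| ^ q * (if |x - y| ≤ 1 / (i : ℝ) then (i : ℝ) else 0))
        = ∫ x in S, g x := by
      have : (fun x => |f x - f y| ^ q / |x - y| ^ q * (if |x - y| ≤ 1 / (i : ℝ) then (i : ℝ) else 0))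
          = S.indicator g := by
        funext x
        rw [Set.indicator_apply]
        by_cases h : |x - y| ≤ 1/(i:ℝ)
        · rw [if_pos h, if_pos]
          have := abs_le.mp h
          exact Set.mem_Icc.mpr ⟨by linarith [this.1], by linarith [this.2]⟩
        · rw [if_neg h, if_neg, mul_zero]
          intro hmem
          obtain ⟨h1, h2⟩ := hmem
          exact h (abs_le.mpr ⟨by linarith, by linarith⟩)
      rw [this, setIntegral_indicator measurableSet_Icc,
        Set.inter_eq_self_of_subset_right hsub]
    -- measurability
    have hfc : ContinuousOn f S := hf.continuousOn.mono hsub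
    have hgm : AEStronglyMeasurable g (volume.restrict S) := by
      have h1 : AEMeasurable f (volume.restrict S) := hfc.aemeasurable measurableSet_Icc
      have h2 : AEMeasurable (fun x => |f x - f y| ^ q) (volume.restrict S) :=
        hrpc.measurable.comp_aemeasurable (continuous_abs.measurable.comp_aemeasurable (h1.sub aemeasurable_const))
      have h3 : Measurable (fun x : ℝ => |x - y| ^ q) :=
        (hrpc.comp ((continuous_id.sub continuous_const).abs)).measurable
      exact ((h2.div h3.aemeasurable).mul aemeasurable_const).aestronglyMeasurable
    -- bound for integrability
    have hAnonneg : ∀ x, 0 ≤ |f x - f y| ^ q / |x - y| ^ q := fun x => by positivity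
    have hAle : ∀ x ∈ S, |f x - f y| ^ q / |x - y| ^ q ≤ (K:ℝ) ^ q := by
      intro x hx
      by_cases hxy : x = y
      · simp [hxy, Real.zero_rpow (ne_of_gt hq0)]
        positivity
      · have hd : (0:ℝ) < |x - y| := abs_pos.mpr (sub_ne_zero.mpr hxy)
        have hd' : (0:ℝ) < |x - y| ^ q := Real.rpow_pos_of_pos hd q
        have hlip : |f x - f y| ≤ (K:ℝ) * |x - y| := by
          have := hf.dist_le_mul x (hsub hx) y (Set.mem_Icc.mpr ⟨le_of_lt hy.1, le_of_lt hy.2⟩)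
          simpa [Real.dist_eq] using this
        have h1 : |f x - f y| ^ q ≤ ((K:ℝ) * |x - y|) ^ q :=
          Real.rpow_le_rpow (abs_nonneg _) hlip hq0.le
        rw [Real.mul_rpow K.coe_nonneg (abs_nonneg _)] at h1
        rw [div_le_iff₀ hd']
        exact h1
    have hint : IntegrableOn g S volume := by
      refine ⟨hgm, HasFiniteIntegral.restrict_of_bounded (C := (K:ℝ)^q * i) hvolfin ?_⟩
      filter_upwards [ae_restrict_mem measurableSet_Icc] with x hx
      rw [Real.norm_eq_abs, hg, abs_of_nonneg (by positivity)]
      exact mul_le_mul_of_nonneg_right (hAle x hx) hipos.le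
    -- constant integral
    have hconst : (∫ _x in S, ((i:ℝ) * c ^ q)) = 2 * c ^ q := by
      rw [setIntegral_const, measureReal_def, hvolS', smul_eq_mul, hr]
      field_simp
    -- difference bound
    have hdiff : ‖∫ x in S, (g x - (i:ℝ) * c ^ q)‖ ≤ (ε/4 * i) * (volume S).toReal := by
      apply norm_setIntegral_le_of_norm_le_const_ae hvolfin
      have hne : ∀ᵐ x ∂(volume.restrict S), x ≠ y := by
        refine ae_restrict_of_ae ?_
        rw [ae_iff]
        simp only [not_not]
        have : {x : ℝ | x = y} = {y} := by ext; simp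
        rw [this]
        exact Real.volume_singleton
      filter_upwards [ae_restrict_mem measurableSet_Icc, hne] with x hx hxy
      have hd : (0:ℝ) < |x - y| := abs_pos.mpr (sub_ne_zero.mpr hxy)
      have hxball : x ∈ Metric.ball y δ ∩ {y}ᶜ := by
        constructor
        · rw [Metric.mem_ball, Real.dist_eq]
          have : |x - y| ≤ r := by
            obtain ⟨h1, h2⟩ := hx
            exact abs_le.mpr ⟨by linarith, by linarith⟩
          linarith
        · exact hxy
      have hclose : dist (|f x - f y| / |x - y|) c < η := hδsub hxball
      have hA : |f x - f y| ^ q / |x - y| ^ q = (|f x - f y| / |x - y|) ^ q :=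
        (Real.div_rpow (abs_nonneg _) (abs_nonneg _) q).symm
      have hvq : dist ((|f x - f y| / |x - y|) ^ q) (c ^ q) < ε/4 := hηc hclose
      simp only [Real.norm_eq_abs, hg]
      rw [hA]
      have : (|f x - f y| / |x - y|) ^ q * (i:ℝ) - (i:ℝ) * c ^ q
          = ((|f x - f y| / |x - y|) ^ q - c ^ q) * (i:ℝ) := by ring
      rw [this, abs_mul, abs_of_nonneg hipos.le]
      apply mul_le_mul_of_nonneg_right _ hipos.le
      rw [Real.dist_eq] at hvq
      exact hvq.le
    rw [Real.dist_eq, hrew]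
    have hsplit : (∫ x in S, g x) - 2 * c ^ q = ∫ x in S, (g x - (i:ℝ) * c ^ q) := by
      rw [integral_sub hint (integrableOn_const hvolfin.ne), hconst]
    rw [hsplit]
    calc |∫ x in S, (g x - (i:ℝ) * c ^ q)| ≤ (ε/4 * i) * (volume S).toReal := hdiff
      _ = ε/2 := by rw [hvolS', hr]; field_simp; ring
      _ < ε := by linarith
  -- conclude
  have hcont2 : ContinuousAt (fun t : ℝ => t ^ (1/q)) (2 * c ^ q) :=
    Real.continuousAt_rpow_const _ _ (Or.inr (by positivity))
  have hcomp := hcont2.tendsto.comp main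
  have hval : (2 * c ^ q) ^ (1/q) = (2:ℝ) ^ (1/q) * c := by
    rw [Real.mul_rpow (by norm_num) (Real.rpow_nonneg hc0 q)]
    congr 1
    rw [← Real.rpow_mul hc0, mul_one_div_cancel (ne_of_gt hq0), Real.rpow_one]
  rw [← hval]
  exact hcomp
end
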